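/- Let ε > 0 and let N ≥ 1 be an integer. Let x : [0,∞) → ℝ^{N+1} be continuous with x_i(0) ≤ x_{i+1}(0) for all i = 0,…,N−1 (particles may initially overlap), such that x is differentiable on (0,∞), x_0(t) < x_1(t) < ⋯ < x_N(t) for all t > 0, and x satisfies for every t > 0 and every i = 0,…,N the ODE ẋ_i(t) = (1/N)·Σ_{k=0}^{N−1} (W_ε(x_{k+1}(t)−x_i(t)) − W_ε(x_k(t)−x_i(t)))/(x_{k+1}(t)−x_k(t)). Then for every t > 0 one has d_i(t) ≥ (2ε/N)·(1 − e^{−t/(2ε³)}) for all i, and consequently for every p ∈ [1,∞], ‖ρ^N(·,t)‖_{L^p(ℝ)} ≤ (2ε)^{−(p−1)/p}·(1 − e^{−t/(2ε³)})^{−(p−1)/p} (with the convention (p−1)/p = 1 for p = ∞). -/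

import Mathlib

open MeasureTheory Real Set
open scoped ENNReal

/-- Scaled Morse potential `W_ε(x) = (1/(2ε)) e^{-|x|/ε}`. -/
noncomputable def Morse (ε x : ℝ) : ℝ := (1 / (2 * ε)) * Real.exp (-|x| / ε)

/-- Derivative of the scaled Morse potential,
`W_ε'(x) = -(1/(2ε²)) sign(x) e^{-|x|/ε}`. -/
noncomputable def Morse' (ε x : ℝ) : ℝ :=
  -(1 / (2 * ε ^ 2)) * Real.sign x * Real.exp (-|x| / ε)

/-- Right-hand side of the particle ODE system:
`(1/N) ∑_{k=0}^{N-1} (W_ε(x_{k+1}-x_i) - W_ε(x_k-x_i))/(x_{k+1}-x_k)`. -/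
noncomputable def particleRHS (ε : ℝ) (N : ℕ) (x : ℕ → ℝ) (i : ℕ) : ℝ :=
  (1 / (N : ℝ)) * ∑ k ∈ Finset.range N,
    (Morse ε (x (k + 1) - x i) - Morse ε (x k - x i)) / (x (k + 1) - x k)

/-- A strictly ordered particle solution on `[0,∞)`:  a differentiable curve
`x = (x_0,…,x_N)` with `x_0(t) < ⋯ < x_N(t)` for all `t ≥ 0`, solving the particle ODE. -/
def IsParticleSol (ε : ℝ) (N : ℕ) (x : ℝ → ℕ → ℝ) : Prop :=
  (∀ t : ℝ, 0 ≤ t → ∀ i < N, x t i < x t (i + 1)) ∧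
  (∀ i ≤ N, ∀ t : ℝ, 0 ≤ t →
    HasDerivWithinAt (fun s => x s i) (particleRHS ε N (x t) i) (Set.Ici 0) t)

/-- The discrete (piecewise constant) density
`ρ^N(y,t) = ∑_{k=0}^{N-1} R_k(t) 1_{[x_k(t), x_{k+1}(t))}(y)` with `R_k = 1/(N d_k)`. -/
noncomputable def discDens (N : ℕ) (x : ℝ → ℕ → ℝ) (y t : ℝ) : ℝ :=
  ∑ k ∈ Finset.range N,
    Set.indicator (Set.Ico (x t k) (x t (k + 1)))
      (fun _ => 1 / ((N : ℝ) * (x t (k + 1) - x t k))) y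

/-- Convolution in the space variable: `(W ∗ ρ)(x) = ∫ W(x-y) ρ(y) dy`. -/
noncomputable def conv (W ρ : ℝ → ℝ) (x : ℝ) : ℝ := ∫ y, W (x - y) * ρ y

lemma morse_cont (ε : ℝ) : Continuous (Morse ε) := by
  unfold Morse
  exact continuous_const.mul (((continuous_abs.neg).div_const ε).rexp)

lemma morse_deriv {ε : ℝ} (hε : 0 < ε) {z : ℝ} (hz : z ≠ 0) :
    HasDerivAt (Morse ε) (Morse' ε z) z := by
  rcases lt_or_gt_of_ne hz with h | h
  · -- z < 0
    have h1 : HasDerivAt (fun w : ℝ => (1 / (2 * ε)) * Real.exp (w / ε))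
        ((1 / (2 * ε)) * (Real.exp (z / ε) * (1 / ε))) z := by
      exact (((hasDerivAt_id z).div_const ε).exp).const_mul _
    have heq : (fun w : ℝ => (1 / (2 * ε)) * Real.exp (w / ε)) =ᶠ[nhds z] Morse ε := by
      filter_upwards [Iio_mem_nhds h] with w hw
      simp only [Morse, abs_of_neg (mem_Iio.mp hw)]
      ring_nf
    have := h1.congr_of_eventuallyEq heq.symm
    refine this.congr_deriv ?_
    simp only [Morse', Real.sign_of_neg h, abs_of_neg h]
    field_simp
  · -- z > 0
    have h1 : HasDerivAt (fun w : ℝ => (1 / (2 * ε)) * Real.exp (-w / ε))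
        ((1 / (2 * ε)) * (Real.exp (-z / ε) * (-1 / ε))) z := by
      exact ((((hasDerivAt_id z).neg).div_const ε).exp).const_mul _
    have heq : (fun w : ℝ => (1 / (2 * ε)) * Real.exp (-w / ε)) =ᶠ[nhds z] Morse ε := by
      filter_upwards [Ioi_mem_nhds h] with w hw
      simp only [Morse, abs_of_pos (mem_Ioi.mp hw)]
    have := h1.congr_of_eventuallyEq heq.symm
    refine this.congr_deriv ?_
    simp only [Morse', Real.sign_of_pos h, abs_of_pos h]
    field_simp

lemma exp_neg_le_quad {u : ℝ} (hu : 0 ≤ u) : Real.exp (-u) ≤ 1 - u + u ^ 2 / 2 := by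
  set h : ℝ → ℝ := fun v => 1 - v + v ^ 2 / 2 - Real.exp (-v) with hh
  have hd : ∀ v : ℝ, HasDerivAt h (-1 + v - Real.exp (-v) * (-1)) v := by
    intro v
    have e1 : HasDerivAt (fun v : ℝ => 1 - v + v ^ 2 / 2) (-1 + v) v := by
      have : HasDerivAt (fun v : ℝ => 1 - v + v ^ 2 / 2) (0 - 1 + 2 * v ^ 1 / 2) v := by
        exact ((hasDerivAt_const v (1:ℝ)).sub (hasDerivAt_id v)).add
          ((hasDerivAt_pow 2 v).div_const 2)
      convert this using 1; ring
    have e2 : HasDerivAt (fun v : ℝ => Real.exp (-v)) (Real.exp (-v) * (-1)) v :=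
      ((hasDerivAt_id v).neg).exp
    exact e1.sub e2
  have hmono : Monotone h := by
    apply monotone_of_deriv_nonneg
    · exact fun v => (hd v).differentiableAt
    · intro v
      rw [(hd v).deriv]
      have := Real.add_one_le_exp (-v)
      nlinarith
  have h2 := hmono hu
  have h0 : h 0 = 0 := by simp [hh]
  rw [h0] at h2
  simp only [hh] at h2
  nlinarith

lemma morse'_diff_ge {ε A B c : ℝ} (hε : 0 < ε) (hAB : A < B)
    (hc : c < A ∨ B < c) :
    Morse' ε (c - B) - Morse' ε (c - A) ≥ -((B - A) / (2 * ε ^ 3)) := by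
  have hε2 : (0:ℝ) < ε ^ 2 := by positivity
  have hu : 0 < (B - A) / ε := div_pos (by linarith) hε
  have hexp : 1 - Real.exp (-((B - A) / ε)) ≤ (B - A) / ε := by
    have := Real.add_one_le_exp (-((B - A) / ε)); linarith
  have hE2pos : 0 < Real.exp (-((B - A) / ε)) := Real.exp_pos _
  rcases hc with h | h
  · have h1 : c - B < 0 := by linarith
    have h2 : c - A < 0 := by linarith
    have e1 : Morse' ε (c - B) = (1 / (2 * ε ^ 2)) * Real.exp ((c - B) / ε) := by
      simp only [Morse', Real.sign_of_neg h1, abs_of_neg h1]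
      ring_nf
    have e2 : Morse' ε (c - A) = (1 / (2 * ε ^ 2)) * Real.exp ((c - A) / ε) := by
      simp only [Morse', Real.sign_of_neg h2, abs_of_neg h2]
      ring_nf
    rw [e1, e2]
    have hsplit : (c - B) / ε = (c - A) / ε + -((B - A) / ε) := by ring
    rw [hsplit, Real.exp_add]
    have hE1 : Real.exp ((c - A) / ε) ≤ 1 := Real.exp_le_one_iff.mpr (by
      apply div_nonpos_of_nonpos_of_nonneg <;> linarith)
    have hE1pos : 0 < Real.exp ((c - A) / ε) := Real.exp_pos _
    have hE2le : Real.exp (-((B - A) / ε)) ≤ 1 := Real.exp_le_one_iff.mpr (by linarith)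
    have key : Real.exp ((c - A) / ε) - Real.exp ((c - A) / ε) * Real.exp (-((B - A) / ε))
        ≤ (B - A) / ε := by nlinarith
    have hc3 : (B - A) / (2 * ε ^ 3) = ((B - A) / ε) * (1 / (2 * ε ^ 2)) := by
      rw [div_mul_div_comm, mul_one]
      congr 1
      ring
    rw [hc3]
    have hw : 0 < 1 / (2 * ε ^ 2) := by positivity
    nlinarith
  · have h1 : 0 < c - B := by linarith
    have h2 : 0 < c - A := by linarith
    have e1 : Morse' ε (c - B) = -(1 / (2 * ε ^ 2)) * Real.exp (-((c - B) / ε)) := by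
      simp only [Morse', Real.sign_of_pos h1, abs_of_pos h1]
      ring_nf
    have e2 : Morse' ε (c - A) = -(1 / (2 * ε ^ 2)) * Real.exp (-((c - A) / ε)) := by
      simp only [Morse', Real.sign_of_pos h2, abs_of_pos h2]
      ring_nf
    rw [e1, e2]
    have hsplit : -((c - A) / ε) = -((c - B) / ε) + -((B - A) / ε) := by ring
    rw [hsplit, Real.exp_add]
    have hE1 : Real.exp (-((c - B) / ε)) ≤ 1 := Real.exp_le_one_iff.mpr (by
      have : 0 ≤ (c - B) / ε := by positivity
      linarith)
    have hE1pos : 0 < Real.exp (-((c - B) / ε)) := Real.exp_pos _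
    have hE2le : Real.exp (-((B - A) / ε)) ≤ 1 := Real.exp_le_one_iff.mpr (by linarith)
    have key : Real.exp (-((c - B) / ε)) - Real.exp (-((c - B) / ε)) * Real.exp (-((B - A) / ε))
        ≤ (B - A) / ε := by nlinarith
    have hc3 : (B - A) / (2 * ε ^ 3) = ((B - A) / ε) * (1 / (2 * ε ^ 2)) := by
      rw [div_mul_div_comm, mul_one]
      congr 1
      ring
    rw [hc3]
    have hw : 0 < 1 / (2 * ε ^ 2) := by positivity
    nlinarith

lemma morse_deriv_shift {ε A B z : ℝ} (hε : 0 < ε) (hzA : z ≠ A) (hzB : z ≠ B) :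
    HasDerivAt (fun w => Morse ε (w - B) - Morse ε (w - A))
      (Morse' ε (z - B) - Morse' ε (z - A)) z := by
  have h1 : HasDerivAt (fun w => Morse ε (w - B)) (Morse' ε (z - B) * 1) z :=
    (morse_deriv hε (sub_ne_zero.mpr hzB)).comp (h := fun w => w - B) z ((hasDerivAt_id z).sub_const B)
  have h2 : HasDerivAt (fun w => Morse ε (w - A)) (Morse' ε (z - A) * 1) z :=
    (morse_deriv hε (sub_ne_zero.mpr hzA)).comp (h := fun w => w - A) z ((hasDerivAt_id z).sub_const A)
  have h3 := h1.sub h2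
  simp only [mul_one] at h3
  exact h3

lemma slope_far {ε A B p q : ℝ} (hε : 0 < ε) (hAB : A < B) (hpq : p < q)
    (hsep : q ≤ A ∨ B ≤ p) :
    -((B - A) / (2 * ε ^ 3)) ≤
      ((Morse ε (q - B) - Morse ε (q - A)) - (Morse ε (p - B) - Morse ε (p - A))) / (q - p) := by
  have hcont : ContinuousOn (fun w => Morse ε (w - B) - Morse ε (w - A)) (Icc p q) :=
    (((morse_cont ε).comp (continuous_sub_right B)).sub
      ((morse_cont ε).comp (continuous_sub_right A))).continuousOn
  have hside : ∀ z ∈ Ioo p q, z < A ∨ B < z := by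
    intro z hz
    rcases hsep with h | h
    · exact Or.inl (lt_of_lt_of_le hz.2 h)
    · exact Or.inr (lt_of_le_of_lt h hz.1)
  have hderiv : ∀ z ∈ Ioo p q, HasDerivAt (fun w => Morse ε (w - B) - Morse ε (w - A))
      (Morse' ε (z - B) - Morse' ε (z - A)) z := by
    intro z hz
    rcases hside z hz with h | h
    · exact morse_deriv_shift hε (ne_of_lt h) (ne_of_lt (h.trans hAB))
    · exact morse_deriv_shift hε (ne_of_gt (hAB.trans h)) (ne_of_gt h)
  obtain ⟨c, hc, hceq⟩ := exists_hasDerivAt_eq_slope _ _ hpq hcont hderiv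
  rw [← hceq]
  exact morse'_diff_ge hε hAB (hside c hc)

lemma slope_mid {ε A B : ℝ} (hε : 0 < ε) (hAB : A < B) :
    1 / ε ^ 2 - (B - A) / (2 * ε ^ 3) ≤
      ((Morse ε (B - B) - Morse ε (B - A)) - (Morse ε (A - B) - Morse ε (A - A))) / (B - A) := by
  have hd : 0 < B - A := by linarith
  have hq := exp_neg_le_quad (u := (B - A) / ε) (le_of_lt (div_pos hd hε))
  have e0 : Morse ε (B - B) = 1 / (2 * ε) := by simp [Morse]
  have e0' : Morse ε (A - A) = 1 / (2 * ε) := by simp [Morse]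
  have e1 : Morse ε (B - A) = 1 / (2 * ε) * Real.exp (-((B - A) / ε)) := by
    rw [Morse, abs_of_pos hd, neg_div]
  have e2 : Morse ε (A - B) = 1 / (2 * ε) * Real.exp (-((B - A) / ε)) := by
    rw [Morse, abs_of_neg (by linarith : A - B < 0), neg_div]
    norm_num
  rw [e0, e0', e1, e2, le_div_iff₀ hd]
  have hε2 : (0:ℝ) < ε ^ 2 := by positivity
  rw [div_pow] at hq
  set E := Real.exp (-((B - A) / ε)) with hE
  calc (1 / ε ^ 2 - (B - A) / (2 * ε ^ 3)) * (B - A)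
      = (1 / ε) * ((B - A) / ε - (B - A) ^ 2 / ε ^ 2 / 2) := by
        field_simp
    _ ≤ (1 / ε) * ((1 - E) + (1 - E)) / 2 := by
        rw [le_div_iff₀ (by norm_num : (0:ℝ) < 2)]
        have h1 : (B - A) / ε - (B - A) ^ 2 / ε ^ 2 / 2 ≤ 1 - E := by linarith
        have h2 : 0 ≤ (1:ℝ) / ε := by positivity
        nlinarith
    _ = 1 / (2 * ε) - 1 / (2 * ε) * E - (1 / (2 * ε) * E - 1 / (2 * ε)) := by
        field_simp
        ring

lemma rhs_diff_ge {ε : ℝ} (hε : 0 < ε) {N : ℕ} (hN : 1 ≤ N) {y : ℕ → ℝ}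
    (hy : ∀ k < N, y k < y (k + 1)) {i : ℕ} (hi : i < N) :
    1 / (N * ε ^ 2) - (y (i + 1) - y i) / (2 * ε ^ 3) ≤
      particleRHS ε N y (i + 1) - particleRHS ε N y i := by
  have hNpos : (0:ℝ) < N := by exact_mod_cast hN
  have hmono : ∀ j k, j ≤ k → k ≤ N → y j ≤ y k := by
    intro j k hjk hkN
    obtain ⟨m, rfl⟩ := Nat.exists_eq_add_of_le hjk
    clear hjk
    induction m with
    | zero => simp
    | succ n ih =>
      have h1 : y j ≤ y (j + n) := ih (by omega)
      have h2 : y (j + n) < y (j + n + 1) := hy _ (by omega)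
      calc y j ≤ y (j + n) := h1
        _ ≤ y (j + (n + 1)) := by rw [← add_assoc]; exact h2.le
  have hAB : y i < y (i + 1) := hy i hi
  set d := y (i + 1) - y i with hd
  have hdpos : 0 < d := sub_pos.mpr hAB
  have hterm : ∀ k ∈ Finset.range N,
      (if k = i then 1 / ε ^ 2 - d / (2 * ε ^ 3) else -(d / (2 * ε ^ 3))) ≤
      (Morse ε (y (k + 1) - y (i + 1)) - Morse ε (y k - y (i + 1))) / (y (k + 1) - y k)
        - (Morse ε (y (k + 1) - y i) - Morse ε (y k - y i)) / (y (k + 1) - y k) := by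
    intro k hk
    have hkN := Finset.mem_range.mp hk
    have hpq : y k < y (k + 1) := hy k hkN
    have hform : (Morse ε (y (k + 1) - y (i + 1)) - Morse ε (y k - y (i + 1))) / (y (k + 1) - y k)
        - (Morse ε (y (k + 1) - y i) - Morse ε (y k - y i)) / (y (k + 1) - y k)
        = ((Morse ε (y (k + 1) - y (i + 1)) - Morse ε (y (k + 1) - y i))
            - (Morse ε (y k - y (i + 1)) - Morse ε (y k - y i))) / (y (k + 1) - y k) := by
      rw [div_sub_div_same]
      congr 1
      ring
    rw [hform]
    by_cases hki : k = i
    · subst hki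
      simp only [if_pos rfl]
      exact slope_mid hε hAB
    · simp only [if_neg hki]
      apply slope_far hε hAB hpq
      rcases Nat.lt_or_ge k i with h | h
      · exact Or.inl (hmono (k + 1) i h (le_of_lt hi))
      · exact Or.inr (hmono (i + 1) k (by omega) (by omega))
  have hsplit : ∀ k : ℕ, (if k = i then 1 / ε ^ 2 - d / (2 * ε ^ 3) else -(d / (2 * ε ^ 3)))
      = -(d / (2 * ε ^ 3)) + (if k = i then 1 / ε ^ 2 else 0) := by
    intro k; by_cases h : k = i <;> simp [h] <;> ring
  have hsum : ∑ k ∈ Finset.range N,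
      (if k = i then 1 / ε ^ 2 - d / (2 * ε ^ 3) else -(d / (2 * ε ^ 3)))
      = (N : ℝ) * -(d / (2 * ε ^ 3)) + 1 / ε ^ 2 := by
    simp only [hsplit]
    rw [Finset.sum_add_distrib, Finset.sum_const, Finset.sum_ite_eq' (Finset.range N) i]
    simp [Finset.mem_range.mpr hi, nsmul_eq_mul]
  have hdiff : particleRHS ε N y (i + 1) - particleRHS ε N y i
      = (1 / (N : ℝ)) * ∑ k ∈ Finset.range N,
        ((Morse ε (y (k + 1) - y (i + 1)) - Morse ε (y k - y (i + 1))) / (y (k + 1) - y k)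
          - (Morse ε (y (k + 1) - y i) - Morse ε (y k - y i)) / (y (k + 1) - y k)) := by
    rw [particleRHS, particleRHS, ← mul_sub, ← Finset.sum_sub_distrib]
  rw [hdiff]
  have hle := Finset.sum_le_sum hterm
  rw [hsum] at hle
  have h1N : (0:ℝ) ≤ 1 / N := by positivity
  calc 1 / (N * ε ^ 2) - d / (2 * ε ^ 3)
      = (1 / (N : ℝ)) * ((N : ℝ) * -(d / (2 * ε ^ 3)) + 1 / ε ^ 2) := by
        field_simp
        ring
    _ ≤ _ := mul_le_mul_of_nonneg_left hle h1N

lemma gap_ge {ε : ℝ} (hε : 0 < ε) {N : ℕ} (hN : 1 ≤ N) {x : ℝ → ℕ → ℝ}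
    (hcont : ∀ i ≤ N, ContinuousOn (fun t => x t i) (Set.Ici 0))
    (hinit : ∀ i < N, x 0 i ≤ x 0 (i + 1))
    (hord : ∀ t : ℝ, 0 < t → ∀ i < N, x t i < x t (i + 1))
    (hode : ∀ i ≤ N, ∀ t : ℝ, 0 < t →
      HasDerivAt (fun s => x s i) (particleRHS ε N (x t) i) t)
    {t : ℝ} (ht : 0 < t) {i : ℕ} (hi : i < N) :
    x t (i + 1) - x t i ≥ (2 * ε / N) * (1 - Real.exp (-t / (2 * ε ^ 3))) := by
  have hNpos : (0:ℝ) < N := by exact_mod_cast hN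
  set c : ℝ := 2 * ε ^ 3 with hcdef
  have hcpos : 0 < c := by positivity
  set φ : ℝ → ℝ := fun s => (x s (i + 1) - x s i) * Real.exp (s / c)
      - ((2 * ε / N) * Real.exp (s / c) - 2 * ε / N) with hφdef
  have hφd : ∀ s : ℝ, 0 < s → HasDerivAt φ
      ((particleRHS ε N (x s) (i + 1) - particleRHS ε N (x s) i) * Real.exp (s / c)
        + (x s (i + 1) - x s i) * (Real.exp (s / c) * (1 / c))
        - (2 * ε / N) * (Real.exp (s / c) * (1 / c))) s := by
    intro s hs
    have hδ : HasDerivAt (fun u => x u (i + 1) - x u i)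
        (particleRHS ε N (x s) (i + 1) - particleRHS ε N (x s) i) s :=
      (hode (i + 1) (by omega) s hs).sub (hode i (by omega) s hs)
    have hexp : HasDerivAt (fun u : ℝ => Real.exp (u / c)) (Real.exp (s / c) * (1 / c)) s := by
      simpa using ((hasDerivAt_id s).div_const c).exp
    exact (hδ.mul hexp).sub ((hexp.const_mul (2 * ε / N)).sub_const (2 * ε / N))
  have hφd0 : ∀ s : ℝ, 0 < s → 0 ≤ ((particleRHS ε N (x s) (i + 1) - particleRHS ε N (x s) i)
        * Real.exp (s / c)
        + (x s (i + 1) - x s i) * (Real.exp (s / c) * (1 / c))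
        - (2 * ε / N) * (Real.exp (s / c) * (1 / c))) := by
    intro s hs
    have hΔ := rhs_diff_ge hε hN (hord s hs) hi
    have key1 : (2 * ε / N) * (1 / c) = 1 / (N * ε ^ 2) := by
      rw [hcdef]; field_simp
    have key2 : (x s (i + 1) - x s i) * (1 / c) = (x s (i + 1) - x s i) / (2 * ε ^ 3) := by
      rw [hcdef]; ring
    have htot : 0 ≤ (particleRHS ε N (x s) (i + 1) - particleRHS ε N (x s) i)
        + (x s (i + 1) - x s i) * (1 / c) - (2 * ε / N) * (1 / c) := by
      rw [key1, key2]; linarith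
    calc (0:ℝ) ≤ ((particleRHS ε N (x s) (i + 1) - particleRHS ε N (x s) i)
          + (x s (i + 1) - x s i) * (1 / c) - (2 * ε / N) * (1 / c)) * Real.exp (s / c) :=
        mul_nonneg htot (Real.exp_pos _).le
      _ = _ := by ring
  have hφcont : ContinuousOn φ (Set.Ici 0) := by
    have he : Continuous fun s : ℝ => Real.exp (s / c) :=
      Real.continuous_exp.comp (continuous_id.div_const c)
    exact (((hcont (i + 1) (by omega)).sub (hcont i (by omega))).mul he.continuousOn).sub
      ((he.continuousOn.const_smul (2 * ε / N)).sub continuousOn_const)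
  have hφmono : MonotoneOn φ (Set.Ici 0) := by
    apply monotoneOn_of_deriv_nonneg (convex_Ici 0) hφcont
    · rw [interior_Ici]
      intro s hs
      exact ((hφd s hs).differentiableAt).differentiableWithinAt
    · rw [interior_Ici]
      intro s hs
      rw [(hφd s hs).deriv]
      exact hφd0 s hs
  have hφ0 : 0 ≤ φ 0 := by
    have := hinit i hi
    simp only [hφdef, zero_div, Real.exp_zero, mul_one]
    linarith
  have hφt : 0 ≤ φ t := le_trans hφ0 (hφmono (self_mem_Ici) (mem_Ici.mpr ht.le) ht.le)
  simp only [hφdef] at hφt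
  have hE1 : Real.exp (-t / c) * Real.exp (t / c) = 1 := by
    rw [← Real.exp_add]; ring_nf; exact Real.exp_zero
  have h2 : (2 * ε / N) * (Real.exp (-t / c) * Real.exp (t / c)) = 2 * ε / N := by
    rw [hE1, mul_one]
  rw [ge_iff_le, ← mul_le_mul_iff_of_pos_right (Real.exp_pos (t / c))]
  nlinarith [hφt, h2]

lemma mono_of_adj {N : ℕ} {y : ℕ → ℝ} (hy : ∀ k < N, y k < y (k + 1)) :
    ∀ j k, j ≤ k → k ≤ N → y j ≤ y k := by
  intro j k hjk hkN
  obtain ⟨m, rfl⟩ := Nat.exists_eq_add_of_le hjk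
  clear hjk
  induction m with
  | zero => simp
  | succ n ih =>
    have h1 : y j ≤ y (j + n) := ih (by omega)
    have h2 : y (j + n) < y (j + n + 1) := hy _ (by omega)
    calc y j ≤ y (j + n) := h1
      _ ≤ y (j + (n + 1)) := by rw [← add_assoc]; exact h2.le

lemma dens_nonneg {N : ℕ} {x : ℝ → ℕ → ℝ} {t : ℝ}
    (hlt : ∀ k < N, x t k < x t (k + 1)) (y : ℝ) : 0 ≤ discDens N x y t := by
  apply Finset.sum_nonneg
  intro k hk
  apply Set.indicator_nonneg
  intro _ _
  have := hlt k (Finset.mem_range.mp hk)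
  exact one_div_nonneg.mpr (mul_nonneg (Nat.cast_nonneg N) (by linarith))

lemma dens_le {N : ℕ} {x : ℝ → ℕ → ℝ} {t M : ℝ} (hM : 0 ≤ M)
    (hlt : ∀ k < N, x t k < x t (k + 1))
    (hc : ∀ k < N, 1 / ((N : ℝ) * (x t (k + 1) - x t k)) ≤ M) (y : ℝ) :
    discDens N x y t ≤ M := by
  have hmono := mono_of_adj hlt
  rw [discDens]
  by_cases hy : ∃ j, j ∈ Finset.range N ∧ y ∈ Set.Ico (x t j) (x t (j + 1))
  · obtain ⟨j, hjm, hjy⟩ := hy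
    have hjN := Finset.mem_range.mp hjm
    rw [Finset.sum_eq_single_of_mem j hjm ?_]
    · rw [Set.indicator_of_mem hjy]
      exact hc j hjN
    · intro k hk hkj
      apply Set.indicator_of_notMem
      intro hky
      have hkN := Finset.mem_range.mp hk
      rcases Nat.lt_or_ge k j with h | h
      · have h1 : x t (k + 1) ≤ x t j := hmono (k + 1) j h (le_of_lt hjN)
        have := hjy.1; have := hky.2
        linarith
      · have hjk : j + 1 ≤ k := by omega
        have h1 : x t (j + 1) ≤ x t k := hmono (j + 1) k hjk (le_of_lt hkN)
        have := hjy.2; have := hky.1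
        linarith
  · push_neg at hy
    rw [Finset.sum_eq_zero fun k hk => Set.indicator_of_notMem (hy k hk) _]
    exact hM

open MeasureTheory in
lemma dens_lintegral {N : ℕ} (hN : 1 ≤ N) {x : ℝ → ℕ → ℝ} {t : ℝ}
    (hlt : ∀ k < N, x t k < x t (k + 1)) :
    ∫⁻ y, ENNReal.ofReal (discDens N x y t) = 1 := by
  have hrw : (fun y => ENNReal.ofReal (discDens N x y t))
      = fun y => ∑ k ∈ Finset.range N,
          Set.indicator (Set.Ico (x t k) (x t (k + 1)))
            (fun _ => ENNReal.ofReal (1 / ((N : ℝ) * (x t (k + 1) - x t k)))) y := by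
    ext y
    rw [discDens, ENNReal.ofReal_sum_of_nonneg]
    · apply Finset.sum_congr rfl
      intro k _
      by_cases h : y ∈ Set.Ico (x t k) (x t (k + 1)) <;> simp [h]
    · intro k hk
      apply Set.indicator_nonneg
      intro _ _
      have := hlt k (Finset.mem_range.mp hk)
      exact one_div_nonneg.mpr (mul_nonneg (Nat.cast_nonneg N) (by linarith))
  rw [hrw, lintegral_finset_sum]
  · have hNne : (N : ℝ) ≠ 0 := by positivity
    have hval : ∀ k ∈ Finset.range N,
        (∫⁻ y, Set.indicator (Set.Ico (x t k) (x t (k + 1)))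
          (fun _ => ENNReal.ofReal (1 / ((N : ℝ) * (x t (k + 1) - x t k)))) y)
        = ENNReal.ofReal (1 / (N : ℝ)) := by
      intro k hk
      have hd : 0 < x t (k + 1) - x t k := sub_pos.mpr (hlt k (Finset.mem_range.mp hk))
      rw [lintegral_indicator measurableSet_Ico, setLIntegral_const, Real.volume_Ico,
        ← ENNReal.ofReal_mul (one_div_nonneg.mpr (mul_nonneg (Nat.cast_nonneg N) hd.le))]
      congr 1
      field_simp
    rw [Finset.sum_congr rfl hval, Finset.sum_const, Finset.card_range, nsmul_eq_mul,
      ← ENNReal.ofReal_natCast, ← ENNReal.ofReal_mul (Nat.cast_nonneg N)]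
    rw [mul_one_div, div_self hNne, ENNReal.ofReal_one]
  · intro k _
    exact measurable_const.indicator measurableSet_Ico

/-- smoothing effect for possibly initially overlapping particles.
If the particles are continuous on `[0,∞)`, merely ordered (possibly overlapping) at `t = 0`,
strictly ordered for `t > 0`, and solve the particle ODE for `t > 0`, then
`d_i(t) ≥ (2ε/N)(1 - e^{-t/(2ε³)})` for `t > 0`, and consequently for every `p ∈ [1,∞]`,
`‖ρ^N(·,t)‖_{L^p} ≤ (2ε)^{-(p-1)/p} (1 - e^{-t/(2ε³)})^{-(p-1)/p}`
(with the convention `(p-1)/p = 1` for `p = ∞`). -/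
theorem stmt6 (ε : ℝ) (hε : 0 < ε) (N : ℕ) (hN : 1 ≤ N) (x : ℝ → ℕ → ℝ)
    (hcont : ∀ i ≤ N, ContinuousOn (fun t => x t i) (Set.Ici 0))
    (hinit : ∀ i < N, x 0 i ≤ x 0 (i + 1))
    (hord : ∀ t : ℝ, 0 < t → ∀ i < N, x t i < x t (i + 1))
    (hode : ∀ i ≤ N, ∀ t : ℝ, 0 < t →
      HasDerivAt (fun s => x s i) (particleRHS ε N (x t) i) t) :
    (∀ t : ℝ, 0 < t → ∀ i < N,
      x t (i + 1) - x t i ≥ (2 * ε / N) * (1 - Real.exp (-t / (2 * ε ^ 3)))) ∧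
    (∀ p : ℝ, 1 ≤ p → ∀ t : ℝ, 0 < t →
      eLpNorm (fun y => discDens N x y t) (ENNReal.ofReal p) volume ≤
        ENNReal.ofReal ((2 * ε) ^ (-((p - 1) / p)) *
          (1 - Real.exp (-t / (2 * ε ^ 3))) ^ (-((p - 1) / p)))) ∧
    (∀ t : ℝ, 0 < t →
      eLpNorm (fun y => discDens N x y t) ⊤ volume ≤
        ENNReal.ofReal ((2 * ε)⁻¹ * (1 - Real.exp (-t / (2 * ε ^ 3)))⁻¹)) := by
  have hNpos : (0:ℝ) < N := by exact_mod_cast hN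
  have h2ε : (0:ℝ) < 2 * ε := by linarith
  have hgap : ∀ t : ℝ, 0 < t → ∀ i < N,
      x t (i + 1) - x t i ≥ (2 * ε / N) * (1 - Real.exp (-t / (2 * ε ^ 3))) :=
    fun t ht i hi => gap_ge hε hN hcont hinit hord hode ht hi
  -- common bound
  have hsetup : ∀ t : ℝ, 0 < t →
      (0 < 1 - Real.exp (-t / (2 * ε ^ 3))) ∧
      (∀ y, discDens N x y t ≤ (2 * ε)⁻¹ * (1 - Real.exp (-t / (2 * ε ^ 3)))⁻¹) := by
    intro t ht
    have he1 : Real.exp (-t / (2 * ε ^ 3)) < 1 := by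
      apply Real.exp_lt_one_iff.mpr
      have : (0:ℝ) < 2 * ε ^ 3 := by positivity
      exact div_neg_of_neg_of_pos (by linarith) this
    have h1e : 0 < 1 - Real.exp (-t / (2 * ε ^ 3)) := by linarith
    refine ⟨h1e, ?_⟩
    have hMpos : 0 < (2 * ε)⁻¹ * (1 - Real.exp (-t / (2 * ε ^ 3)))⁻¹ := by positivity
    apply dens_le hMpos.le (hord t ht)
    intro k hk
    have hd := hgap t ht k hk
    have hg : 0 < (2 * ε / N) * (1 - Real.exp (-t / (2 * ε ^ 3))) := by positivity
    have hNd : 2 * ε * (1 - Real.exp (-t / (2 * ε ^ 3))) ≤ (N : ℝ) * (x t (k + 1) - x t k) := by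
      calc 2 * ε * (1 - Real.exp (-t / (2 * ε ^ 3)))
          = (N : ℝ) * ((2 * ε / N) * (1 - Real.exp (-t / (2 * ε ^ 3)))) := by
            field_simp
        _ ≤ (N : ℝ) * (x t (k + 1) - x t k) := by
            apply mul_le_mul_of_nonneg_left hd hNpos.le
    calc 1 / ((N : ℝ) * (x t (k + 1) - x t k))
        ≤ 1 / (2 * ε * (1 - Real.exp (-t / (2 * ε ^ 3)))) := by
          apply one_div_le_one_div_of_le (by positivity) hNd
      _ = (2 * ε)⁻¹ * (1 - Real.exp (-t / (2 * ε ^ 3)))⁻¹ := by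
          rw [one_div, mul_inv]
  refine ⟨hgap, ?_, ?_⟩
  · -- Lp case
    intro p hp t ht
    obtain ⟨h1e, hbound⟩ := hsetup t ht
    have hp0 : (0:ℝ) < p := by linarith
    set e := Real.exp (-t / (2 * ε ^ 3)) with hedef
    set M : ℝ := (2 * ε)⁻¹ * (1 - e)⁻¹ with hMdef
    have hMpos : 0 < M := by rw [hMdef]; positivity
    have hq0 : (ENNReal.ofReal p) ≠ 0 := by
      simp only [ne_eq, ENNReal.ofReal_eq_zero, not_le]; linarith
    have hqt : (ENNReal.ofReal p) ≠ ⊤ := ENNReal.ofReal_ne_top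
    rw [eLpNorm_eq_lintegral_rpow_enorm_toReal hq0 hqt]
    rw [ENNReal.toReal_ofReal hp0.le]
    have hnn : ∀ y, ‖discDens N x y t‖ₑ = ENNReal.ofReal (discDens N x y t) :=
      fun y => Real.enorm_eq_ofReal (dens_nonneg (hord t ht) y)
    simp only [hnn]
    have hmeas : Measurable fun y => ENNReal.ofReal (discDens N x y t) := by
      apply Measurable.ennreal_ofReal
      apply Finset.measurable_sum
      intro k _
      exact measurable_const.indicator measurableSet_Ico
    have hpoint : ∀ y, ENNReal.ofReal (discDens N x y t) ^ p
        ≤ ENNReal.ofReal M ^ (p - 1) * ENNReal.ofReal (discDens N x y t) := by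
      intro y
      have h1 : ENNReal.ofReal (discDens N x y t) ≤ ENNReal.ofReal M :=
        ENNReal.ofReal_le_ofReal (hbound y)
      calc ENNReal.ofReal (discDens N x y t) ^ p
          = ENNReal.ofReal (discDens N x y t) ^ (p - 1)
            * ENNReal.ofReal (discDens N x y t) ^ (1:ℝ) := by
            rw [← ENNReal.rpow_add_of_nonneg _ _ (by linarith) zero_le_one]
            norm_num
        _ ≤ ENNReal.ofReal M ^ (p - 1) * ENNReal.ofReal (discDens N x y t) ^ (1:ℝ) := by
            exact mul_le_mul_left (ENNReal.rpow_le_rpow h1 (by linarith)) _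
        _ = ENNReal.ofReal M ^ (p - 1) * ENNReal.ofReal (discDens N x y t) := by
            rw [ENNReal.rpow_one]
    have hint : (∫⁻ y, ENNReal.ofReal (discDens N x y t) ^ p)
        ≤ ENNReal.ofReal M ^ (p - 1) := by
      calc (∫⁻ y, ENNReal.ofReal (discDens N x y t) ^ p)
          ≤ ∫⁻ y, ENNReal.ofReal M ^ (p - 1) * ENNReal.ofReal (discDens N x y t) :=
            lintegral_mono hpoint
        _ = ENNReal.ofReal M ^ (p - 1) * ∫⁻ y, ENNReal.ofReal (discDens N x y t) :=
            lintegral_const_mul _ hmeas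
        _ = ENNReal.ofReal M ^ (p - 1) := by
            rw [dens_lintegral hN (hord t ht), mul_one]
    calc (∫⁻ y, ENNReal.ofReal (discDens N x y t) ^ p) ^ (1 / p)
        ≤ (ENNReal.ofReal M ^ (p - 1)) ^ (1 / p) :=
          ENNReal.rpow_le_rpow hint (by positivity)
      _ = ENNReal.ofReal M ^ ((p - 1) / p) := by
          rw [← ENNReal.rpow_mul, mul_one_div]
      _ = ENNReal.ofReal (M ^ ((p - 1) / p)) := ENNReal.ofReal_rpow_of_pos hMpos
      _ = ENNReal.ofReal ((2 * ε) ^ (-((p - 1) / p)) * (1 - e) ^ (-((p - 1) / p))) := by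
          congr 1
          rw [hMdef, Real.mul_rpow (inv_nonneg.mpr h2ε.le) (inv_nonneg.mpr h1e.le),
            Real.inv_rpow h2ε.le, Real.inv_rpow h1e.le,
            ← Real.rpow_neg h2ε.le, ← Real.rpow_neg h1e.le]
  · -- L∞ case
    intro t ht
    obtain ⟨h1e, hbound⟩ := hsetup t ht
    rw [eLpNorm_exponent_top]
    apply eLpNormEssSup_le_of_ae_bound (C := (2 * ε)⁻¹ * (1 - Real.exp (-t / (2 * ε ^ 3)))⁻¹)
    filter_upwards with y
    rw [Real.norm_eq_abs, abs_of_nonneg (dens_nonneg (hord t ht) y)]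
    exact hbound y
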